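/- Let Σ be a polynomial orbit-finite set, M an orbit-finite monoid, and h : Σ* → M an equivariant monoid homomorphism satisfying condition (*). Then there is a finitely supported function E : Σ → Σ such that: (a) for every a ∈ Σ, if the J-class of h(a) contains an idempotent, then h(E(a)) is an idempotent J-equivalent to h(a) and E(a) has the same least support as h(E(a)); and (b) if a₁, a₂ ∈ Σ are such that h(a₁) and h(a₂) are J-equivalent, then E(a₁) and E(a₂) have the same least support. -/

import Mathlib

/-- Atoms: a fixed countably infinite set. -/
abbrev Atom : Type := ℕ

/-- Atom automorphisms: bijections of the atoms. -/
abbrev AtomPerm : Type := Equiv.Perm Atom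

/-- `x` (in a set with atoms `X`) is supported by the finite set `A` of atoms. -/
def SupportedBy {X : Type*} [MulAction AtomPerm X] (A : Finset Atom) (x : X) : Prop :=
  ∀ π : AtomPerm, (∀ a ∈ A, π a = a) → π • x = x

def FinitelySupported {X : Type*} [MulAction AtomPerm X] (x : X) : Prop :=
  ∃ A : Finset Atom, SupportedBy A x

def IsLeastSupport {X : Type*} [MulAction AtomPerm X] (A : Finset Atom) (x : X) : Prop :=
  SupportedBy A x ∧ ∀ B : Finset Atom, SupportedBy B x → A ⊆ B

/-- A function `f : X → Y` is supported by `A` if `f (π • x) = π • f x`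
for every `A`-automorphism `π`. -/
def FunSupportedBy {X Y : Type*} [MulAction AtomPerm X] [MulAction AtomPerm Y]
    (A : Finset Atom) (f : X → Y) : Prop :=
  ∀ π : AtomPerm, (∀ a ∈ A, π a = a) → ∀ x : X, f (π • x) = π • f x

/-- A function is equivariant if it commutes with all atom automorphisms. -/
def FunEquivariant {X Y : Type*} [MulAction AtomPerm X] [MulAction AtomPerm Y]
    (f : X → Y) : Prop :=
  ∀ (π : AtomPerm) (x : X), f (π • x) = π • f x

/-- A subset `S` of a set with atoms is supported by `A`
(as an element of the powerset with the induced action). -/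
def SetSupportedBy {Z : Type*} [MulAction AtomPerm Z] (A : Finset Atom) (S : Set Z) : Prop :=
  ∀ π : AtomPerm, (∀ a ∈ A, π a = a) → ∀ z : Z, z ∈ S ↔ π • z ∈ S

/-- A set with atoms is orbit-finite if every element is finitely supported and, for some
finite set `A` of atoms, it is a union of finitely many orbits of the group of
`A`-automorphisms. -/
def OrbitFinite (X : Type*) [MulAction AtomPerm X] : Prop :=
  (∀ x : X, FinitelySupported x) ∧
  ∃ (A : Finset Atom) (reps : Finset X),
    ∀ x : X, ∃ r ∈ reps, ∃ π : AtomPerm, (∀ a ∈ A, π a = a) ∧ π • r = x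

/-- The multiplication of a monoid with atoms is finitely supported. -/
def MulFinitelySupported (M : Type*) [Monoid M] [MulAction AtomPerm M] : Prop :=
  ∃ A : Finset Atom, ∀ π : AtomPerm, (∀ a ∈ A, π a = a) →
    ∀ x y : M, π • (x * y) = (π • x) * (π • y)

/-- An orbit-finite monoid: the underlying set is orbit-finite and
multiplication is finitely supported. -/
def OrbitFiniteMonoid (M : Type*) [Monoid M] [MulAction AtomPerm M] : Prop :=
  OrbitFinite M ∧ MulFinitelySupported M

/-- `x` is an infix of `y`. -/
def MInfix {M : Type*} [Monoid M] (x y : M) : Prop := ∃ a b : M, y = a * x * b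

/-- `x` is a prefix of `y`. -/
def MPrefix {M : Type*} [Monoid M] (x y : M) : Prop := ∃ a : M, y = x * a

/-- `x` is a suffix of `y`. -/
def MSuffix {M : Type*} [Monoid M] (x y : M) : Prop := ∃ a : M, y = a * x

def JEquiv {M : Type*} [Monoid M] (x y : M) : Prop := MInfix x y ∧ MInfix y x
def REquiv {M : Type*} [Monoid M] (x y : M) : Prop := MPrefix x y ∧ MPrefix y x
def LEquiv {M : Type*} [Monoid M] (x y : M) : Prop := MSuffix x y ∧ MSuffix y x

/-- A sequence of monoid elements is smooth if every element of the sequence can be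
recovered from the product of the whole sequence by multiplying on both sides. -/
def SmoothSeq {M : Type*} [Monoid M] (l : List M) : Prop :=
  ∀ x ∈ l, ∃ y z : M, y * l.prod * z = x

/-- Codes for polynomial orbit-finite sets: built from the atoms and singleton sets
by finite products and coproducts. -/
inductive PolyCode : Type where
  | atom : PolyCode
  | unit : PolyCode
  | prod : PolyCode → PolyCode → PolyCode
  | sum : PolyCode → PolyCode → PolyCode

/-- The polynomial orbit-finite set described by a code. -/
def PolyCode.interp : PolyCode → Type
  | .atom => Atom
  | .unit => Unit
  | .prod c d => c.interp × d.interp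
  | .sum c d => c.interp ⊕ d.interp

/-- The componentwise action of atom automorphisms on a polynomial orbit-finite set. -/
def PolyCode.act (π : AtomPerm) : (c : PolyCode) → c.interp → c.interp
  | .atom, a => π a
  | .unit, u => u
  | .prod c d, p => (c.act π p.1, d.act π p.2)
  | .sum c d, x => x.elim (fun a => Sum.inl (c.act π a)) (fun b => Sum.inr (d.act π b))

theorem PolyCode.act_one : ∀ (c : PolyCode) (x : c.interp), c.act 1 x = x
  | .atom, a => rfl
  | .unit, _ => rfl
  | .prod c d, p => by
      exact congrArg₂ Prod.mk (PolyCode.act_one c p.1) (PolyCode.act_one d p.2)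
  | .sum c d, x => by
      cases x with
      | inl a => exact congrArg Sum.inl (PolyCode.act_one c a)
      | inr b => exact congrArg Sum.inr (PolyCode.act_one d b)

theorem PolyCode.act_mul (π σ : AtomPerm) :
    ∀ (c : PolyCode) (x : c.interp), c.act (π * σ) x = c.act π (c.act σ x)
  | .atom, a => rfl
  | .unit, _ => rfl
  | .prod c d, p => by
      exact congrArg₂ Prod.mk (PolyCode.act_mul π σ c p.1) (PolyCode.act_mul π σ d p.2)
  | .sum c d, x => by
      cases x with
      | inl a => exact congrArg Sum.inl (PolyCode.act_mul π σ c a)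
      | inr b => exact congrArg Sum.inr (PolyCode.act_mul π σ d b)

instance (c : PolyCode) : MulAction AtomPerm c.interp where
  smul π x := c.act π x
  one_smul x := c.act_one x
  mul_smul π σ x := c.act_mul π σ x

/-- `h : Σ* → M` is a monoid homomorphism from the free monoid of strings over `Σ`. -/
def IsListHom {X M : Type*} [Monoid M] (h : List X → M) : Prop :=
  h [] = 1 ∧ ∀ u v : List X, h (u ++ v) = h u * h v

/-- Equivariance of a function on strings, with the letterwise action on strings. -/
def ListHomEquivariant {X M : Type*} [MulAction AtomPerm X] [Monoid M] [MulAction AtomPerm M]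
    (h : List X → M) : Prop :=
  ∀ (π : AtomPerm) (l : List X), h (l.map fun x => π • x) = π • h l

/-- Condition (*): every monoid element has a letter representation, i.e. a letter with the
same image under `h` and the same least support. -/
def StarCondition (c : PolyCode) {M : Type*} [Monoid M] [MulAction AtomPerm M]
    (h : List c.interp → M) : Prop :=
  ∀ m : M, ∃ a : c.interp, h [a] = m ∧
    ∃ A : Finset Atom, IsLeastSupport A a ∧ IsLeastSupport A m

section Aux

open Finset

variable {X : Type*} [MulAction AtomPerm X]

theorem supportedBy_perm {A : Finset Atom} {x : X} (π : AtomPerm)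
    (hA : SupportedBy A x) : SupportedBy (A.image ⇑π) (π • x) := by
  intro σ hσ
  have h1 : ∀ a ∈ A, (π⁻¹ * σ * π) a = a := by
    intro a ha
    have : σ (π a) = π a := hσ _ (Finset.mem_image_of_mem _ ha)
    simp [Equiv.Perm.mul_apply, this]
  have h2 := hA _ h1
  calc σ • π • x = π • (π⁻¹ * σ * π) • x := by
        rw [← mul_smul, ← mul_smul]; congr 1; group
    _ = π • x := by rw [h2]

theorem least_unique {A B : Finset Atom} {x : X} (hA : IsLeastSupport A x)
    (hB : IsLeastSupport B x) : A = B :=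
  Finset.Subset.antisymm (hA.2 _ hB.1) (hB.2 _ hA.1)

theorem least_perm {A : Finset Atom} {x : X} (π : AtomPerm)
    (hA : IsLeastSupport A x) : IsLeastSupport (A.image ⇑π) (π • x) := by
  refine ⟨supportedBy_perm π hA.1, ?_⟩
  intro B hB
  have h2 : SupportedBy (B.image ⇑π⁻¹) x := by
    have := supportedBy_perm (x := π • x) π⁻¹ hB
    rwa [inv_smul_smul] at this
  have h3 := hA.2 _ h2
  intro a ha
  obtain ⟨b, hb, rfl⟩ := Finset.mem_image.1 ha
  have h4 := h3 hb
  obtain ⟨d, hd, hdb⟩ := Finset.mem_image.1 h4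
  have : π b = d := by rw [← hdb]; simp
  rwa [this]

end Aux
section JAux

variable {M : Type*} [Monoid M]

theorem jequiv_refl (x : M) : JEquiv x x :=
  ⟨⟨1, 1, by simp⟩, ⟨1, 1, by simp⟩⟩

theorem jequiv_symm {x y : M} (h : JEquiv x y) : JEquiv y x := ⟨h.2, h.1⟩

theorem minfix_trans {x y z : M} (h1 : MInfix x y) (h2 : MInfix y z) : MInfix x z := by
  obtain ⟨a, b, rfl⟩ := h1; obtain ⟨u, v, rfl⟩ := h2
  exact ⟨u * a, b * v, by simp [mul_assoc]⟩

theorem jequiv_trans {x y z : M} (h1 : JEquiv x y) (h2 : JEquiv y z) : JEquiv x z :=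
  ⟨minfix_trans h1.1 h2.1, minfix_trans h2.2 h1.2⟩

variable [MulAction AtomPerm M]

theorem minfix_perm {B : Finset Atom}
    (hB : ∀ π : AtomPerm, (∀ a ∈ B, π a = a) → ∀ x y : M, π • (x * y) = (π • x) * (π • y))
    {π : AtomPerm} (hπ : ∀ a ∈ B, π a = a) {x y : M} (h : MInfix x y) :
    MInfix (π • x) (π • y) := by
  obtain ⟨a, b, rfl⟩ := h
  exact ⟨π • a, π • b, by rw [hB π hπ, hB π hπ]⟩

theorem jequiv_perm {B : Finset Atom}
    (hB : ∀ π : AtomPerm, (∀ a ∈ B, π a = a) → ∀ x y : M, π • (x * y) = (π • x) * (π • y))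
    {π : AtomPerm} (hπ : ∀ a ∈ B, π a = a) {x y : M} (h : JEquiv x y) :
    JEquiv (π • x) (π • y) :=
  ⟨minfix_perm hB hπ h.1, minfix_perm hB hπ h.2⟩

theorem fix_inv {B : Finset Atom} {π : AtomPerm} (hπ : ∀ a ∈ B, π a = a) :
    ∀ a ∈ B, π⁻¹ a = a := by
  intro a ha
  have h1 := hπ a ha
  have : π⁻¹ (π a) = π⁻¹ a := by rw [h1]
  simpa using this.symm

end JAux
section PolyAux

/-- The finite set of atoms occurring in an element of a polynomial set. -/
def atomsOf : (c : PolyCode) → c.interp → Finset Atom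
  | .atom, a => {a}
  | .unit, _ => ∅
  | .prod c d, p => atomsOf c p.1 ∪ atomsOf d p.2
  | .sum c d, x => x.elim (atomsOf c) (atomsOf d)

theorem smul_def (c : PolyCode) (π : AtomPerm) (x : c.interp) : π • x = c.act π x := rfl

theorem act_eq_of_fix : ∀ (c : PolyCode) (π : AtomPerm) (x : c.interp),
    (∀ a ∈ atomsOf c x, π a = a) → c.act π x = x
  | .atom, π, a, hfix => hfix a (Finset.mem_singleton_self a)
  | .unit, _, _, _ => rfl
  | .prod c d, π, p, hfix => by
      have h1 := act_eq_of_fix c π p.1 (fun a ha => hfix a (by simp [atomsOf, ha]))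
      have h2 := act_eq_of_fix d π p.2 (fun a ha => hfix a (by simp [atomsOf, ha]))
      exact Prod.ext h1 h2
  | .sum c d, π, x, hfix => by
      cases x with
      | inl a =>
          have h1 := act_eq_of_fix c π a (fun b hb => hfix b (by simpa [atomsOf] using hb))
          exact congrArg Sum.inl h1
      | inr a =>
          have h1 := act_eq_of_fix d π a (fun b hb => hfix b (by simpa [atomsOf] using hb))
          exact congrArg Sum.inr h1

theorem fix_of_act_eq : ∀ (c : PolyCode) (π : AtomPerm) (x : c.interp),
    c.act π x = x → ∀ a ∈ atomsOf c x, π a = a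
  | .atom, π, a, hact => by
      intro b hb
      simp only [atomsOf, Finset.mem_singleton] at hb
      have hb' : b = a := Finset.mem_singleton.1 hb
      subst hb'; exact hact
  | .unit, _, _, _ => by intro a ha; simp [atomsOf] at ha
  | .prod c d, π, p, hact => by
      intro a ha
      simp only [atomsOf, Finset.mem_union] at ha
      have h1 : c.act π p.1 = p.1 := congrArg Prod.fst hact
      have h2 : d.act π p.2 = p.2 := congrArg Prod.snd hact
      rcases ha with ha | ha
      · exact fix_of_act_eq c π p.1 h1 a ha
      · exact fix_of_act_eq d π p.2 h2 a ha
  | .sum c d, π, x, hact => by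
      cases x with
      | inl b =>
          intro a ha
          simp only [atomsOf, Sum.elim_inl] at ha
          have h1 : Sum.inl (c.act π b) = (Sum.inl b : c.interp ⊕ d.interp) := hact
          exact fix_of_act_eq c π b (Sum.inl.inj h1) a ha
      | inr b =>
          intro a ha
          simp only [atomsOf, Sum.elim_inr] at ha
          have h1 : Sum.inr (d.act π b) = (Sum.inr b : c.interp ⊕ d.interp) := hact
          exact fix_of_act_eq d π b (Sum.inr.inj h1) a ha

theorem smul_eq_of_fix {c : PolyCode} {π : AtomPerm} {x : c.interp}
    (hfix : ∀ a ∈ atomsOf c x, π a = a) : π • x = x := act_eq_of_fix c π x hfix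

theorem fix_of_smul_eq {c : PolyCode} {π : AtomPerm} {x : c.interp}
    (hact : π • x = x) : ∀ a ∈ atomsOf c x, π a = a := fix_of_act_eq c π x hact

end PolyAux
set_option linter.unusedSectionVars false
set_option linter.unusedVariables false
section SAux

open Classical

theorem image_fix {p : Finset Atom} {π : AtomPerm} (hfix : ∀ x ∈ p, π x = x) :
    p.image ⇑π = p := by
  rw [Finset.image_congr (g := id) (fun x hx => hfix x hx), Finset.image_id]

theorem mem_image_perm {s : Finset Atom} {π : AtomPerm} {a : Atom} :
    a ∈ s.image ⇑π ↔ π⁻¹ a ∈ s := by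
  constructor
  · rintro h
    obtain ⟨b, hb, rfl⟩ := Finset.mem_image.1 h
    simpa using hb
  · intro h
    refine Finset.mem_image.2 ⟨π⁻¹ a, h, by simp⟩

variable {M : Type*} [Monoid M] [MulAction AtomPerm M]

/-- Intersection of the least supports over a `J`-class. -/
noncomputable def Tset (sup : M → Finset Atom) (m : M) : Finset Atom :=
  (sup m).filter fun a => ∀ f, JEquiv f m → a ∈ sup f

theorem mem_Tset {sup : M → Finset Atom} {m : M} {a : Atom} :
    a ∈ Tset sup m ↔ ∀ f, JEquiv f m → a ∈ sup f := by
  simp only [Tset, Finset.mem_filter]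
  exact ⟨fun h => h.2, fun h => ⟨h m (jequiv_refl m), h⟩⟩

theorem Tset_subset {sup : M → Finset Atom} {m f : M} (h : JEquiv f m) :
    Tset sup m ⊆ sup f := fun a ha => mem_Tset.1 ha f h

theorem Tset_J {sup : M → Finset Atom} {m₁ m₂ : M} (h : JEquiv m₁ m₂) :
    Tset sup m₁ = Tset sup m₂ := by
  ext a
  simp only [mem_Tset]
  exact ⟨fun H f hf => H f (jequiv_trans hf (jequiv_symm h)),
         fun H f hf => H f (jequiv_trans hf h)⟩

theorem Tset_perm {sup : M → Finset Atom} {B : Finset Atom}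
    (hB : ∀ π : AtomPerm, (∀ a ∈ B, π a = a) → ∀ x y : M, π • (x * y) = (π • x) * (π • y))
    (hsup_perm : ∀ (π : AtomPerm) (m : M), sup (π • m) = (sup m).image ⇑π)
    {π : AtomPerm} (hπ : ∀ a ∈ B, π a = a) (m : M) :
    Tset sup (π • m) = (Tset sup m).image ⇑π := by
  ext a
  rw [mem_image_perm, mem_Tset, mem_Tset]
  constructor
  · intro H g hg
    have h1 : JEquiv (π • g) (π • m) := jequiv_perm hB hπ hg
    have h2 := H _ h1
    rw [hsup_perm, mem_image_perm] at h2
    simpa using h2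
  · intro H f hf
    have h1 : JEquiv (π⁻¹ • f) (π⁻¹ • (π • m)) := jequiv_perm hB (fix_inv hπ) hf
    rw [inv_smul_smul] at h1
    have h2 := H _ h1
    rw [hsup_perm, mem_image_perm] at h2
    simpa using h2

/-- Possible "extra parts" (within `A`) of supports of idempotents in the `J`-class. -/
noncomputable def PartSet (sup : M → Finset Atom) (A : Finset Atom) (m : M) :
    Finset (Finset Atom) :=
  A.powerset.filter fun p => ∃ e, e * e = e ∧ JEquiv e m ∧ sup e = Tset sup m ∪ p

theorem PartSet_J {sup : M → Finset Atom} {A : Finset Atom} {m₁ m₂ : M} (h : JEquiv m₁ m₂) :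
    PartSet sup A m₁ = PartSet sup A m₂ := by
  unfold PartSet
  rw [Tset_J h]
  congr 1
  funext p
  apply propext
  constructor
  · rintro ⟨e, he, hj, hs⟩; exact ⟨e, he, jequiv_trans hj h, hs⟩
  · rintro ⟨e, he, hj, hs⟩; exact ⟨e, he, jequiv_trans hj (jequiv_symm h), hs⟩

theorem PartSet_perm {sup : M → Finset Atom} {A B : Finset Atom} (hBA : B ⊆ A)
    (hB : ∀ π : AtomPerm, (∀ a ∈ B, π a = a) → ∀ x y : M, π • (x * y) = (π • x) * (π • y))
    (hsup_perm : ∀ (π : AtomPerm) (m : M), sup (π • m) = (sup m).image ⇑π)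
    {π : AtomPerm} (hπ : ∀ a ∈ A, π a = a) (m : M) :
    PartSet sup A (π • m) = PartSet sup A m := by
  have hπB : ∀ a ∈ B, π a = a := fun a ha => hπ a (hBA ha)
  have hπB' : ∀ a ∈ B, π⁻¹ a = a := fix_inv hπB
  ext p
  simp only [PartSet, Finset.mem_filter, Finset.mem_powerset]
  constructor
  · rintro ⟨hpA, e, he, hj, hs⟩
    refine ⟨hpA, π⁻¹ • e, ?_, ?_, ?_⟩
    · rw [← hB π⁻¹ hπB', he]
    · have := jequiv_perm hB hπB' hj
      rwa [inv_smul_smul] at this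
    · rw [hsup_perm, hs, Tset_perm hB hsup_perm hπB m, Finset.image_union,
        Finset.image_image]
      have himid : (Tset sup m).image (⇑π⁻¹ ∘ ⇑π) = Tset sup m := by
        rw [Finset.image_congr (g := id) (fun x _ => by simp), Finset.image_id]
      rw [himid, image_fix (fun x hx => fix_inv hπ x (hpA hx))]
  · rintro ⟨hpA, e, he, hj, hs⟩
    refine ⟨hpA, π • e, ?_, ?_, ?_⟩
    · rw [← hB π hπB, he]
    · exact jequiv_perm hB hπB hj
    · rw [hsup_perm, hs, Finset.image_union, image_fix (fun x hx => hπ x (hpA hx)),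
        Tset_perm hB hsup_perm hπB m]

/-- A canonical selection from a finite set of finite sets. -/
noncomputable def sel (P : Finset (Finset Atom)) : Finset Atom :=
  if hP : ∃ p, p ∈ P then Classical.choose hP else ∅

theorem sel_mem {P : Finset (Finset Atom)} (hP : ∃ p, p ∈ P) : sel P ∈ P := by
  rw [sel, dif_pos hP]; exact Classical.choose_spec hP

/-- The canonical support set associated to a `J`-class. -/
noncomputable def Sset (sup : M → Finset Atom) (A : Finset Atom) (m : M) : Finset Atom :=
  Tset sup m ∪ sel (PartSet sup A m)

theorem sel_PartSet_subset {sup : M → Finset Atom} {A : Finset Atom} (m : M) :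
    sel (PartSet sup A m) ⊆ A := by
  by_cases hP : ∃ p, p ∈ PartSet sup A m
  · have := sel_mem hP
    simp only [PartSet, Finset.mem_filter, Finset.mem_powerset] at this
    exact this.1
  · rw [sel, dif_neg hP]; exact Finset.empty_subset _

theorem Sset_J {sup : M → Finset Atom} {A : Finset Atom} {m₁ m₂ : M} (h : JEquiv m₁ m₂) :
    Sset sup A m₁ = Sset sup A m₂ := by
  rw [Sset, Sset, Tset_J h, PartSet_J h]

theorem Sset_perm {sup : M → Finset Atom} {A B : Finset Atom} (hBA : B ⊆ A)
    (hB : ∀ π : AtomPerm, (∀ a ∈ B, π a = a) → ∀ x y : M, π • (x * y) = (π • x) * (π • y))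
    (hsup_perm : ∀ (π : AtomPerm) (m : M), sup (π • m) = (sup m).image ⇑π)
    {π : AtomPerm} (hπ : ∀ a ∈ A, π a = a) (m : M) :
    Sset sup A (π • m) = (Sset sup A m).image ⇑π := by
  have hπB : ∀ a ∈ B, π a = a := fun a ha => hπ a (hBA ha)
  rw [Sset, Sset, Tset_perm hB hsup_perm hπB m, PartSet_perm hBA hB hsup_perm hπ,
    Finset.image_union, image_fix (fun x hx => hπ x (sel_PartSet_subset m hx))]

end SAux
section KeyAux
open Classical

variable {M : Type*} [Monoid M] [MulAction AtomPerm M]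

theorem key_idem (sup : M → Finset Atom) (hlsm : ∀ m : M, IsLeastSupport (sup m) m)
    (hsup_perm : ∀ (π : AtomPerm) (m : M), sup (π • m) = (sup m).image ⇑π)
    {B : Finset Atom}
    (hB : ∀ π : AtomPerm, (∀ a ∈ B, π a = a) → ∀ x y : M, π • (x * y) = (π • x) * (π • y))
    {A F : Finset Atom} (hBA : B ⊆ A) (hFA : F ⊆ A) (hFB : ∀ x ∈ F, x ∉ B)
    {K : ℕ} (hK : ∀ m : M, (sup m).card ≤ K) (hFcard : 2 * K < F.card) :
    ∀ (m : M) (n : ℕ) (e : M), e * e = e → JEquiv e m →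
      ((sup e) \ (Tset sup m ∪ A)).card ≤ n →
      ∃ e', e' * e' = e' ∧ JEquiv e' m ∧ sup e' ⊆ Tset sup m ∪ A := by
  intro m n
  induction n with
  | zero =>
      intro e he hj hcard
      refine ⟨e, he, hj, ?_⟩
      rw [← Finset.sdiff_eq_empty_iff_subset]
      exact Finset.card_eq_zero.1 (Nat.le_zero.1 hcard)
  | succ n ih =>
      intro e he hj hcard
      by_cases hle : ((sup e) \ (Tset sup m ∪ A)).card ≤ n
      · exact ih e he hj hle
      · have hpos : 0 < ((sup e) \ (Tset sup m ∪ A)).card := by omega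
        obtain ⟨a, ha⟩ := Finset.card_pos.1 hpos
        rw [Finset.mem_sdiff, Finset.mem_union] at ha
        obtain ⟨hae, haTA⟩ := ha
        push_neg at haTA
        obtain ⟨haT, haA⟩ := haTA
        have hf : ∃ f, JEquiv f m ∧ a ∉ sup f := by
          by_contra H
          push_neg at H
          exact haT (mem_Tset.2 fun f hfm => H f hfm)
        obtain ⟨f, hfm, haf⟩ := hf
        have hb : ∃ b ∈ F, b ∉ sup e ∪ sup f := by
          by_contra H
          push_neg at H
          have h1 : F ⊆ sup e ∪ sup f := H
          have h2 := Finset.card_le_card h1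
          have h3 := Finset.card_union_le (sup e) (sup f)
          have h4 := hK e; have h5 := hK f
          omega
        obtain ⟨b, hbF, hbef⟩ := hb
        rw [Finset.mem_union] at hbef
        push_neg at hbef
        obtain ⟨hbe, hbf⟩ := hbef
        have hab : a ≠ b := fun hEq => haA (hFA (hEq ▸ hbF))
        set π : AtomPerm := Equiv.swap a b with hπdef
        have hπB : ∀ x ∈ B, π x = x := by
          intro x hx
          exact Equiv.swap_apply_of_ne_of_ne
            (fun hEq => haA (hBA (hEq ▸ hx))) (fun hEq => hFB b hbF (hEq ▸ hx))
        have hπf : π • f = f := by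
          refine (hlsm f).1 π ?_
          intro x hx
          exact Equiv.swap_apply_of_ne_of_ne
            (fun hEq => haf (hEq ▸ hx)) (fun hEq => hbf (hEq ▸ hx))
        have he' : (π • e) * (π • e) = π • e := by rw [← hB π hπB, he]
        have hj' : JEquiv (π • e) m := by
          have h1 : JEquiv e f := jequiv_trans hj (jequiv_symm hfm)
          have h2 := jequiv_perm hB hπB h1
          rw [hπf] at h2
          exact jequiv_trans h2 hfm
        have hsub : sup (π • e) \ (Tset sup m ∪ A) ⊆ ((sup e) \ (Tset sup m ∪ A)).erase a := by
          intro x hx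
          rw [Finset.mem_sdiff] at hx
          obtain ⟨hx1, hx2⟩ := hx
          rw [hsup_perm] at hx1
          obtain ⟨y, hy, hyx⟩ := Finset.mem_image.1 hx1
          have hya : y ≠ a := by
            rintro rfl
            rw [Equiv.swap_apply_left] at hyx
            exact hx2 (Finset.mem_union_right _ (hFA (hyx ▸ hbF)))
          have hyb : y ≠ b := fun hEq => hbe (hEq ▸ hy)
          have hxy : x = y := by rw [← hyx]; exact Equiv.swap_apply_of_ne_of_ne hya hyb
          subst hxy
          exact Finset.mem_erase.2 ⟨hya, Finset.mem_sdiff.2 ⟨hy, hx2⟩⟩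
        refine ih (π • e) he' hj' ?_
        have h6 := Finset.card_le_card hsub
        have h7 : (((sup e) \ (Tset sup m ∪ A)).erase a).card
            = ((sup e) \ (Tset sup m ∪ A)).card - 1 :=
          Finset.card_erase_of_mem (Finset.mem_sdiff.2 ⟨hae, by
            rw [Finset.mem_union]; push_neg; exact ⟨haT, haA⟩⟩)
        omega

theorem exists_idem_S (sup : M → Finset Atom) (hlsm : ∀ m : M, IsLeastSupport (sup m) m)
    (hsup_perm : ∀ (π : AtomPerm) (m : M), sup (π • m) = (sup m).image ⇑π)
    {B : Finset Atom}
    (hB : ∀ π : AtomPerm, (∀ a ∈ B, π a = a) → ∀ x y : M, π • (x * y) = (π • x) * (π • y))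
    {A F : Finset Atom} (hBA : B ⊆ A) (hFA : F ⊆ A) (hFB : ∀ x ∈ F, x ∉ B)
    {K : ℕ} (hK : ∀ m : M, (sup m).card ≤ K) (hFcard : 2 * K < F.card)
    (m : M) (hm : ∃ e : M, e * e = e ∧ JEquiv e m) :
    ∃ e : M, e * e = e ∧ JEquiv e m ∧ sup e = Sset sup A m := by
  obtain ⟨e₀, he₀, hj₀⟩ := hm
  obtain ⟨e, he, hj, hsub⟩ := key_idem sup hlsm hsup_perm hB hBA hFA hFB hK hFcard m
    ((sup e₀ \ (Tset sup m ∪ A)).card) e₀ he₀ hj₀ le_rfl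
  have hp : (sup e ∩ A) ∈ PartSet sup A m := by
    rw [PartSet, Finset.mem_filter, Finset.mem_powerset]
    refine ⟨Finset.inter_subset_right, e, he, hj, ?_⟩
    apply Finset.Subset.antisymm
    · intro x hx
      rw [Finset.mem_union]
      rcases Finset.mem_union.1 (hsub hx) with hxT | hxA
      · exact Or.inl hxT
      · exact Or.inr (Finset.mem_inter.2 ⟨hx, hxA⟩)
    · rw [Finset.union_subset_iff]
      exact ⟨Tset_subset hj, Finset.inter_subset_left⟩
  have hPne : ∃ p, p ∈ PartSet sup A m := ⟨_, hp⟩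
  have hsel := sel_mem hPne
  rw [PartSet, Finset.mem_filter] at hsel
  obtain ⟨e', he', hj', hs'⟩ := hsel.2
  exact ⟨e', he', hj', by rw [Sset]; exact hs'⟩

end KeyAux
open Classical in
/-- For an equivariant homomorphism `h : Σ* → M` into an orbit-finite monoid satisfying
condition (*), there is a finitely supported function `E : Σ → Σ` such that
(a) for every `a`, if the J-class of `h(a)` contains an idempotent, then `E(a)` is a
letter representation of an idempotent J-equivalent to `h(a)`; and
(b) letters whose `h`-images are J-equivalent get `E`-values with the same least support. -/
theorem idempotent_letter_representation (c : PolyCode)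
    {M : Type*} [Monoid M] [MulAction AtomPerm M] (hM : OrbitFiniteMonoid M)
    (h : List c.interp → M) (hHom : IsListHom h) (hEqv : ListHomEquivariant h)
    (hStar : StarCondition c h) :
    ∃ E : c.interp → c.interp,
      (∃ A : Finset Atom, FunSupportedBy A E) ∧
      (∀ a : c.interp, (∃ e : M, e * e = e ∧ JEquiv e (h [a])) →
        (h [E a] * h [E a] = h [E a] ∧ JEquiv (h [E a]) (h [a]) ∧
          ∃ A : Finset Atom, IsLeastSupport A (E a) ∧ IsLeastSupport A (h [E a]))) ∧
      (∀ a₁ a₂ : c.interp, JEquiv (h [a₁]) (h [a₂]) →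
        ∃ A : Finset Atom, IsLeastSupport A (E a₁) ∧ IsLeastSupport A (E a₂)) := by
  classical
  obtain ⟨⟨hfs, A₀, reps, hreps⟩, B, hB⟩ := hM
  have hStar' : ∀ m : M, ∃ a : c.interp, ∃ A : Finset Atom,
      h [a] = m ∧ IsLeastSupport A a ∧ IsLeastSupport A m := by
    intro m; obtain ⟨a, ha, A, h1, h2⟩ := hStar m; exact ⟨a, A, ha, h1, h2⟩
  choose ltr sup hltr hlsa hlsm using hStar'
  have hsup_perm : ∀ (π : AtomPerm) (m : M), sup (π • m) = (sup m).image ⇑π := by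
    intro π m
    exact least_unique (hlsm (π • m)) (least_perm π (hlsm m))
  have hsingle : ∀ (π : AtomPerm) (a : c.interp), h [π • a] = π • h [a] := by
    intro π a
    simpa using hEqv π [a]
  have hone : ∀ π : AtomPerm, π • (1 : M) = 1 := by
    intro π
    have h1 := hEqv π []
    simp only [List.map_nil] at h1
    rw [hHom.1] at h1
    exact h1.symm
  set A₁ : Finset Atom := A₀ ∪ B with hA₁def
  set K : ℕ := reps.sup (fun r => (sup r).card) with hKdef
  have hK : ∀ m : M, (sup m).card ≤ K := by
    intro m
    obtain ⟨r, hr, π, hπ, hπr⟩ := hreps m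
    rw [← hπr, hsup_perm, Finset.card_image_of_injective _ π.injective]
    exact Finset.le_sup (f := fun r => (sup r).card) hr
  set mx : ℕ := A₁.sup id with hmxdef
  set F : Finset Atom := (Finset.range (2 * K + 1)).image (fun i => mx + 1 + i) with hFdef
  have hFcard : 2 * K < F.card := by
    have hinj : Function.Injective (fun i : ℕ => mx + 1 + i) := by
      intro i j hij; dsimp at hij; omega
    rw [hFdef, Finset.card_image_of_injective _ hinj, Finset.card_range]
    omega
  have hFA₁ : ∀ x ∈ F, x ∉ A₁ := by
    intro x hx hxA
    rw [hFdef, Finset.mem_image] at hx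
    obtain ⟨i, hi, rfl⟩ := hx
    have h1 : id (mx + 1 + i) ≤ mx := Finset.le_sup (f := id) hxA
    simp only [id] at h1
    omega
  set A : Finset Atom := A₁ ∪ F ∪ sup 1 with hAdef
  have hBA : B ⊆ A := fun x hx => by
    rw [hAdef]
    exact Finset.mem_union_left _ (Finset.mem_union_left _ (Finset.mem_union_right _ hx))
  have hFA : F ⊆ A := fun x hx => by
    rw [hAdef]
    exact Finset.mem_union_left _ (Finset.mem_union_right _ hx)
  have hsup1A : sup (1 : M) ⊆ A := fun x hx => by
    rw [hAdef]; exact Finset.mem_union_right _ hx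
  have hFB : ∀ x ∈ F, x ∉ B := fun x hx hxB => hFA₁ x hx (Finset.mem_union_right _ hxB)
  have hreal : ∀ m : M, (∃ e : M, e * e = e ∧ JEquiv e m) →
      ∃ e : M, e * e = e ∧ JEquiv e m ∧ sup e = Sset sup A m :=
    fun m hm => exists_idem_S sup hlsm hsup_perm hB hBA hFA hFB hK hFcard m hm
  -- the target element for each potential representative letter
  have htgtex : ∀ r : c.interp, ∃ t : M,
      ((∃ e : M, e * e = e ∧ JEquiv e (h [r])) →
        (t * t = t ∧ JEquiv t (h [r]) ∧ sup t = Sset sup A (h [r]))) ∧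
      ((¬ ∃ e : M, e * e = e ∧ JEquiv e (h [r])) → t = 1) := by
    intro r
    by_cases hr : ∃ e : M, e * e = e ∧ JEquiv e (h [r])
    · obtain ⟨e, h1, h2, h3⟩ := hreal _ hr
      exact ⟨e, fun _ => ⟨h1, h2, h3⟩, fun hn => absurd hr hn⟩
    · exact ⟨1, fun hc => absurd hc hr, fun _ => rfl⟩
  choose tgt htgt1 htgt2 using htgtex
  -- the orbit setoid with respect to permutations fixing A
  have saequiv : Equivalence (fun x y : c.interp =>
      ∃ π : AtomPerm, (∀ a ∈ A, π a = a) ∧ π • x = y) := by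
    constructor
    · intro x; exact ⟨1, fun a _ => rfl, one_smul _ _⟩
    · rintro x y ⟨π, hπ, rfl⟩
      exact ⟨π⁻¹, fix_inv hπ, inv_smul_smul π x⟩
    · rintro x y z ⟨π, hπ, rfl⟩ ⟨σ, hσ, rfl⟩
      exact ⟨σ * π, fun a ha => by
        rw [Equiv.Perm.mul_apply, hπ a ha, hσ a ha], (mul_smul σ π x).symm ▸ rfl⟩
  set sa : Setoid c.interp := ⟨_, saequiv⟩ with hsadef
  set rp : c.interp → c.interp := fun x => Quotient.out (Quotient.mk sa x) with hrpdef
  have hrepx : ∀ x : c.interp, ∃ π : AtomPerm, (∀ a ∈ A, π a = a) ∧ π • (rp x) = x := by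
    intro x
    exact Quotient.exact (Quotient.out_eq (Quotient.mk sa x))
  choose pi hpiA hpix using hrepx
  have hrpinv : ∀ (π : AtomPerm), (∀ a ∈ A, π a = a) → ∀ x, rp (π • x) = rp x := by
    intro π hπ x
    have h1 : Quotient.mk sa x = Quotient.mk sa (π • x) :=
      Quotient.sound ⟨π, hπ, rfl⟩
    show Quotient.out (Quotient.mk sa (π • x)) = Quotient.out (Quotient.mk sa x)
    rw [← h1]
  set E : c.interp → c.interp := fun x => pi x • ltr (tgt (rp x)) with hEdef
  -- support bound for the chosen letters
  have hsupℓ : ∀ r : c.interp, sup (tgt r) ⊆ atomsOf c r ∪ A := by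
    intro r
    by_cases hr : ∃ e : M, e * e = e ∧ JEquiv e (h [r])
    · obtain ⟨-, -, h3⟩ := htgt1 r hr
      rw [h3, Sset]
      intro x hx
      rcases Finset.mem_union.1 hx with hx | hx
      · have h4 : Tset sup (h [r]) ⊆ sup (h [r]) := Tset_subset (jequiv_refl _)
        have h5 : sup (h [r]) ⊆ atomsOf c r := by
          apply (hlsm (h [r])).2
          intro π hπ
          have h6 : π • r = r := smul_eq_of_fix hπ
          rw [← hsingle, h6]
        exact Finset.mem_union_left _ (h5 (h4 hx))
      · exact Finset.mem_union_right _ (sel_PartSet_subset _ hx)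
    · rw [htgt2 r hr]
      exact fun x hx => Finset.mem_union_right _ (hsup1A hx)
  have hfixℓ : ∀ (δ : AtomPerm) (r : c.interp), (∀ a ∈ A, δ a = a) → δ • r = r →
      δ • ltr (tgt r) = ltr (tgt r) := by
    intro δ r hδA hδr
    apply (hlsa (tgt r)).1
    intro a ha
    rcases Finset.mem_union.1 (hsupℓ r ha) with hmem | hmem
    · exact fix_of_smul_eq hδr a hmem
    · exact hδA a hmem
  refine ⟨E, ⟨A, ?_⟩, ?_, ?_⟩
  · -- E is supported by A
    intro π hπ x
    have hr : rp (π • x) = rp x := hrpinv π hπ x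
    have hσ : pi (π • x) • rp x = π • x := by rw [← hr]; exact hpix (π • x)
    have hτ : pi x • rp x = x := hpix x
    have hδA : ∀ a ∈ A, ((pi (π • x))⁻¹ * (π * pi x)) a = a := by
      intro a ha
      simp only [Equiv.Perm.mul_apply]
      rw [hpiA x a ha, hπ a ha]
      exact fix_inv (hpiA (π • x)) a ha
    have hδr : ((pi (π • x))⁻¹ * (π * pi x)) • rp x = rp x := by
      have h1 : (π * pi x) • rp x = pi (π • x) • rp x := by rw [mul_smul, hτ, hσ]
      rw [mul_smul, h1, inv_smul_smul]
    have hδℓ := hfixℓ _ _ hδA hδr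
    show pi (π • x) • ltr (tgt (rp (π • x))) = π • (pi x • ltr (tgt (rp x)))
    rw [hr]
    calc pi (π • x) • ltr (tgt (rp x))
        = pi (π • x) • (((pi (π • x))⁻¹ * (π * pi x)) • ltr (tgt (rp x))) := by rw [hδℓ]
      _ = π • (pi x • ltr (tgt (rp x))) := by
          rw [← mul_smul]
          have hgrp : pi (π • x) * ((pi (π • x))⁻¹ * (π * pi x)) = π * pi x := by group
          rw [hgrp, mul_smul]
  · -- condition (a)
    intro a ha
    obtain ⟨e, he, hj⟩ := ha
    have hπA := hpiA a
    have hπr : pi a • rp a = a := hpix a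
    set π := pi a with hπdef
    set r := rp a with hrdef
    have hπB : ∀ x ∈ B, π x = x := fun x hx => hπA x (hBA hx)
    have hha : h [a] = π • h [r] := by rw [← hsingle, hπr]
    have hcond : ∃ e : M, e * e = e ∧ JEquiv e (h [r]) := by
      refine ⟨π⁻¹ • e, ?_, ?_⟩
      · rw [← hB π⁻¹ (fix_inv hπB), he]
      · have h1 := jequiv_perm hB (fix_inv hπB) hj
        rwa [hha, inv_smul_smul] at h1
    obtain ⟨hidem, hjt, hsupt⟩ := htgt1 r hcond
    have hEa : E a = π • ltr (tgt r) := rfl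
    have hhEa : h [E a] = π • tgt r := by rw [hEa, hsingle, hltr]
    refine ⟨?_, ?_, ?_⟩
    · rw [hhEa, ← hB π hπB, hidem]
    · rw [hhEa, hha]; exact jequiv_perm hB hπB hjt
    · refine ⟨(sup (tgt r)).image ⇑π, ?_, ?_⟩
      · rw [hEa]; exact least_perm π (hlsa (tgt r))
      · rw [hhEa]; exact least_perm π (hlsm (tgt r))
  · -- condition (b)
    intro a₁ a₂ hj12
    have hπA₁ := hpiA a₁
    have hπA₂ := hpiA a₂
    have hπr₁ : pi a₁ • rp a₁ = a₁ := hpix a₁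
    have hπr₂ : pi a₂ • rp a₂ = a₂ := hpix a₂
    have hπB₁ : ∀ x ∈ B, pi a₁ x = x := fun x hx => hπA₁ x (hBA hx)
    have hπB₂ : ∀ x ∈ B, pi a₂ x = x := fun x hx => hπA₂ x (hBA hx)
    have hha₁ : h [a₁] = pi a₁ • h [rp a₁] := by rw [← hsingle, hπr₁]
    have hha₂ : h [a₂] = pi a₂ • h [rp a₂] := by rw [← hsingle, hπr₂]
    have hcond_iff : ∀ (π : AtomPerm), (∀ x ∈ B, π x = x) → ∀ (m : M),
        (∃ e : M, e * e = e ∧ JEquiv e m) → (∃ e : M, e * e = e ∧ JEquiv e (π • m)) := by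
      rintro π hπ m ⟨e, he, hj⟩
      exact ⟨π • e, by rw [← hB π hπ, he], jequiv_perm hB hπ hj⟩
    by_cases hcnd : ∃ e : M, e * e = e ∧ JEquiv e (h [rp a₁])
    · -- both classes contain idempotents
      have hcnd₁' : ∃ e : M, e * e = e ∧ JEquiv e (h [a₁]) := by
        have := hcond_iff (pi a₁) hπB₁ _ hcnd
        rwa [← hha₁] at this
      have hcnd₂' : ∃ e : M, e * e = e ∧ JEquiv e (h [a₂]) := by
        obtain ⟨e, he, hj⟩ := hcnd₁'
        exact ⟨e, he, jequiv_trans hj hj12⟩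
      have hcnd₂ : ∃ e : M, e * e = e ∧ JEquiv e (h [rp a₂]) := by
        have := hcond_iff (pi a₂)⁻¹ (fix_inv hπB₂) _ hcnd₂'
        rwa [hha₂, inv_smul_smul] at this
      obtain ⟨-, -, hsup₁⟩ := htgt1 (rp a₁) hcnd
      obtain ⟨-, -, hsup₂⟩ := htgt1 (rp a₂) hcnd₂
      have himg₁ : (sup (tgt (rp a₁))).image ⇑(pi a₁) = Sset sup A (h [a₁]) := by
        rw [hsup₁, ← Sset_perm hBA hB hsup_perm hπA₁, ← hha₁]
      have himg₂ : (sup (tgt (rp a₂))).image ⇑(pi a₂) = Sset sup A (h [a₂]) := by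
        rw [hsup₂, ← Sset_perm hBA hB hsup_perm hπA₂, ← hha₂]
      refine ⟨Sset sup A (h [a₁]), ?_, ?_⟩
      · rw [← himg₁]
        exact least_perm (pi a₁) (hlsa (tgt (rp a₁)))
      · rw [Sset_J hj12, ← himg₂]
        exact least_perm (pi a₂) (hlsa (tgt (rp a₂)))
    · -- neither class contains an idempotent
      have hcnd₁' : ¬ ∃ e : M, e * e = e ∧ JEquiv e (h [a₁]) := by
        intro hc
        apply hcnd
        have := hcond_iff (pi a₁)⁻¹ (fix_inv hπB₁) _ hc
        rwa [hha₁, inv_smul_smul] at this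
      have hcnd₂' : ¬ ∃ e : M, e * e = e ∧ JEquiv e (h [a₂]) := by
        rintro ⟨e, he, hj⟩
        exact hcnd₁' ⟨e, he, jequiv_trans hj (jequiv_symm hj12)⟩
      have hcnd₂ : ¬ ∃ e : M, e * e = e ∧ JEquiv e (h [rp a₂]) := by
        intro hc
        apply hcnd₂'
        have := hcond_iff (pi a₂) hπB₂ _ hc
        rwa [← hha₂] at this
      have ht₁ := htgt2 _ hcnd
      have ht₂ := htgt2 _ hcnd₂
      have himg₁ : (sup (tgt (rp a₁))).image ⇑(pi a₁) = sup (1 : M) := by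
        rw [ht₁]
        exact image_fix (fun x hx => hπA₁ x (hsup1A hx))
      have himg₂ : (sup (tgt (rp a₂))).image ⇑(pi a₂) = sup (1 : M) := by
        rw [ht₂]
        exact image_fix (fun x hx => hπA₂ x (hsup1A hx))
      refine ⟨sup (1 : M), ?_, ?_⟩
      · rw [← himg₁]
        exact least_perm (pi a₁) (hlsa (tgt (rp a₁)))
      · rw [← himg₂]
        exact least_perm (pi a₂) (hlsa (tgt (rp a₂)))
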